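/- Let C be a category and F : C → C an endofunctor. Let a : F A → A be an F-algebra and suppose b : B → F B is a coalgebra terminal relative to a, i.e. there is an isomorphism, natural in coalgebras c, between coalgebra morphisms c → b and coalgebra-to-algebra morphisms from c to a. Then b : B → F B is an isomorphism; in particular B is a fixed point of F. -/
import Mathlib


open CategoryTheory

/-- If `b : B ⟶ F B` is terminal relative to the algebra `a : F A ⟶ A`
(there is a bijection, natural in the coalgebra `(X, x)`, between coalgebra
morphisms into `b` and coalgebra-to-algebra morphisms into `a`), then `b`
is an isomorphism. -/
theorem relatively_terminal_coalgebra_is_fixed_point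
    {C : Type*} [Category C] (F : C ⥤ C)
    {A B : C} (a : F.obj A ⟶ A) (b : B ⟶ F.obj B)
    (φ : ∀ (X : C) (x : X ⟶ F.obj X),
      {f : X ⟶ B // x ≫ F.map f = f ≫ b} ≃ {f : X ⟶ A // f = x ≫ F.map f ≫ a})
    (nat : ∀ (X Y : C) (x : X ⟶ F.obj X) (y : Y ⟶ F.obj Y) (g : X ⟶ Y)
      (hg : x ≫ F.map g = g ≫ y)
      (f : Y ⟶ B) (hf : y ≫ F.map f = f ≫ b)
      (hgf : x ≫ F.map (g ≫ f) = (g ≫ f) ≫ b),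
      ((φ X x) ⟨g ≫ f, hgf⟩ : X ⟶ A) = g ≫ ((φ Y y) ⟨f, hf⟩ : Y ⟶ A)) :
    IsIso b := by
  -- the hylomorphism from (B, b) corresponding to the identity
  have hid : b ≫ F.map (𝟙 B) = 𝟙 B ≫ b := by simp
  set h : B ⟶ A := ((φ B b) ⟨𝟙 B, hid⟩ : B ⟶ A) with hh
  have hprop : h = b ≫ F.map h ≫ a := ((φ B b) ⟨𝟙 B, hid⟩).2
  -- F h ≫ a is a hylomorphism from (F B, F b)
  have key : F.map h ≫ a = F.map b ≫ F.map (F.map h ≫ a) ≫ a := by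
    conv_lhs => rw [hprop]
    simp [F.map_comp]
  set gs := (φ (F.obj B) (F.map b)).symm ⟨F.map h ≫ a, key⟩ with hgs
  have hgcoalg : F.map b ≫ F.map (gs : F.obj B ⟶ B) = (gs : F.obj B ⟶ B) ≫ b := gs.2
  have happ : ((φ (F.obj B) (F.map b)) ⟨(gs : F.obj B ⟶ B), gs.2⟩ : F.obj B ⟶ A)
      = F.map h ≫ a := by
    rw [hgs]
    have := (φ (F.obj B) (F.map b)).apply_symm_apply ⟨F.map h ≫ a, key⟩
    rw [show (⟨((φ (F.obj B) (F.map b)).symm ⟨F.map h ≫ a, key⟩ : F.obj B ⟶ B),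
        ((φ (F.obj B) (F.map b)).symm ⟨F.map h ≫ a, key⟩).2⟩ :
        {f : F.obj B ⟶ B // F.map b ≫ F.map f = f ≫ b})
        = (φ (F.obj B) (F.map b)).symm ⟨F.map h ≫ a, key⟩ from rfl, this]
  -- b ≫ gs is a coalgebra endomorphism of (B, b)
  have hbg : b ≫ F.map (b ≫ (gs : F.obj B ⟶ B)) = (b ≫ (gs : F.obj B ⟶ B)) ≫ b := by
    rw [F.map_comp, hgcoalg]
    simp
  have hnat := nat B (F.obj B) b (F.map b) b rfl (gs : F.obj B ⟶ B) gs.2 hbg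
  rw [happ] at hnat
  -- so φ sends b ≫ gs to b ≫ F h ≫ a = h, same as the identity
  have hEq : ((φ B b) ⟨b ≫ (gs : F.obj B ⟶ B), hbg⟩ : B ⟶ A)
      = ((φ B b) ⟨𝟙 B, hid⟩ : B ⟶ A) := by
    rw [hnat, ← hh, ← hprop]
  have hinj : (⟨b ≫ (gs : F.obj B ⟶ B), hbg⟩ :
      {f : B ⟶ B // b ≫ F.map f = f ≫ b}) = ⟨𝟙 B, hid⟩ :=
    (φ B b).injective (Subtype.ext hEq)
  have h1 : b ≫ (gs : F.obj B ⟶ B) = 𝟙 B := congrArg Subtype.val hinj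
  have h2 : (gs : F.obj B ⟶ B) ≫ b = 𝟙 (F.obj B) := by
    rw [← hgcoalg, ← F.map_comp, h1, F.map_id]
  exact ⟨(gs : F.obj B ⟶ B), h1, h2⟩
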